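/- Let V be a finite-dimensional real normed vector space and C ⊆ V a nonempty closed convex set which is locally polyhedral with convex local cones (Γ_c)_{c ∈ C}. Then C = ⋂_{c ∈ C} (c + Γ_c), the intersection over all points c ∈ C of the translated local cones. -/

import Mathlib

open Pointwise

/-- A cone in a real vector space: contains `0` and is closed under
multiplication by nonnegative real scalars. -/
def IsCone {V : Type*} [AddCommGroup V] [Module ℝ V] (Γ : Set V) : Prop :=
  (0 : V) ∈ Γ ∧ ∀ r : ℝ, 0 ≤ r → ∀ v ∈ Γ, r • v ∈ Γ

/-- A nonempty closed convex locally polyhedral set is the intersection of all of its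
translated local cones. -/
theorem closed_convex_locally_polyhedral_eq_iInter_local_cones
    {V : Type*} [NormedAddCommGroup V] [NormedSpace ℝ V] [FiniteDimensional ℝ V]
    (C : Set V) (hne : C.Nonempty) (hclosed : IsClosed C) (hconv : Convex ℝ C)
    (Γloc : V → Set V)
    (hΓcone : ∀ c ∈ C, IsCone (Γloc c))
    (hΓconv : ∀ c ∈ C, Convex ℝ (Γloc c))
    (hlocal : ∀ c ∈ C, ∃ U ∈ nhds c, C ∩ U = (c +ᵥ Γloc c) ∩ U) :
    C = ⋂ c ∈ C, (c +ᵥ Γloc c) := by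
  apply Set.Subset.antisymm
  · intro x hx
    refine Set.mem_iInter₂.mpr fun c hc => ?_
    obtain ⟨U, hU, hCU⟩ := hlocal c hc
    obtain ⟨ε, hε, hball⟩ := Metric.mem_nhds_iff.mp hU
    by_cases hxc : x = c
    · subst hxc
      rw [Set.mem_vadd_set_iff_neg_vadd_mem]
      simpa using (hΓcone x hx).1
    have hd : 0 < ‖x - c‖ := by
      simpa [sub_eq_zero] using hxc
    set t : ℝ := min (1/2) (ε / (2 * ‖x - c‖)) with ht_def
    have ht0 : 0 < t := lt_min (by norm_num) (by positivity)
    have ht1 : t ≤ 1/2 := min_le_left _ _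
    have hy : c + t • (x - c) ∈ C := by
      have heq : c + t • (x - c) = (1 - t) • c + t • x := by
        simp [smul_sub, sub_smul]; abel
      rw [heq]
      exact hconv hc hx (by linarith) ht0.le (by ring)
    have hyU : c + t • (x - c) ∈ U := by
      apply hball
      rw [Metric.mem_ball, dist_eq_norm]
      have heq : c + t • (x - c) - c = t • (x - c) := by abel
      rw [heq, norm_smul, Real.norm_eq_abs, abs_of_pos ht0]
      have h2 : t ≤ ε / (2 * ‖x - c‖) := min_le_right _ _
      have : t * ‖x - c‖ ≤ (ε / (2 * ‖x - c‖)) * ‖x - c‖ :=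
        mul_le_mul_of_nonneg_right h2 hd.le
      have hlt : (ε / (2 * ‖x - c‖)) * ‖x - c‖ < ε := by
        rw [div_mul_eq_mul_div, mul_comm, mul_div_assoc]
        calc ‖x - c‖ * (ε / (2 * ‖x - c‖)) = ε / 2 := by
              field_simp
          _ < ε := by linarith
      linarith
    have hmem : c + t • (x - c) ∈ c +ᵥ Γloc c :=
      (hCU ▸ Set.mem_inter hy hyU).1
    have htΓ : t • (x - c) ∈ Γloc c := by
      rw [Set.mem_vadd_set_iff_neg_vadd_mem] at hmem
      simpa using hmem
    have hΓ : x - c ∈ Γloc c := by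
      have := (hΓcone c hc).2 t⁻¹ (by positivity) _ htΓ
      rwa [smul_smul, inv_mul_cancel₀ ht0.ne', one_smul] at this
    rw [Set.mem_vadd_set_iff_neg_vadd_mem]
    simpa [sub_eq_neg_add] using hΓ
  · intro x hx
    by_contra hxC
    obtain ⟨c, hc, hdist⟩ := hclosed.exists_infDist_eq_dist hne x
    have hx' : x ∈ c +ᵥ Γloc c := Set.mem_iInter₂.mp hx c hc
    have hΓ : x - c ∈ Γloc c := by
      rw [Set.mem_vadd_set_iff_neg_vadd_mem] at hx'
      simpa [sub_eq_neg_add] using hx'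
    obtain ⟨U, hU, hCU⟩ := hlocal c hc
    obtain ⟨ε, hε, hball⟩ := Metric.mem_nhds_iff.mp hU
    have hxc : x ≠ c := fun h => hxC (h ▸ hc)
    have hd : 0 < ‖x - c‖ := by simpa [sub_eq_zero] using hxc
    set t : ℝ := min (1/2) (ε / (2 * ‖x - c‖)) with ht_def
    have ht0 : 0 < t := lt_min (by norm_num) (by positivity)
    have ht1 : t ≤ 1/2 := min_le_left _ _
    have htΓ : t • (x - c) ∈ Γloc c := (hΓcone c hc).2 t ht0.le _ hΓ
    have hyΓ : c + t • (x - c) ∈ c +ᵥ Γloc c := by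
      rw [Set.mem_vadd_set_iff_neg_vadd_mem]
      simpa using htΓ
    have hyU : c + t • (x - c) ∈ U := by
      apply hball
      rw [Metric.mem_ball, dist_eq_norm]
      have heq : c + t • (x - c) - c = t • (x - c) := by abel
      rw [heq, norm_smul, Real.norm_eq_abs, abs_of_pos ht0]
      have h2 : t ≤ ε / (2 * ‖x - c‖) := min_le_right _ _
      have : t * ‖x - c‖ ≤ (ε / (2 * ‖x - c‖)) * ‖x - c‖ :=
        mul_le_mul_of_nonneg_right h2 hd.le
      have hlt : (ε / (2 * ‖x - c‖)) * ‖x - c‖ < ε := by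
        rw [div_mul_eq_mul_div, mul_comm, mul_div_assoc]
        calc ‖x - c‖ * (ε / (2 * ‖x - c‖)) = ε / 2 := by
              field_simp
          _ < ε := by linarith
      linarith
    have hyC : c + t • (x - c) ∈ C := (hCU.symm ▸ Set.mem_inter hyΓ hyU).1
    have hle : Metric.infDist x C ≤ dist x (c + t • (x - c)) :=
      Metric.infDist_le_dist_of_mem hyC
    rw [hdist] at hle
    have hcalc : dist x (c + t • (x - c)) = (1 - t) * ‖x - c‖ := by
      rw [dist_eq_norm]
      have heq : x - (c + t • (x - c)) = (1 - t) • (x - c) := by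
        simp [sub_smul, smul_sub]; abel
      rw [heq, norm_smul, Real.norm_eq_abs, abs_of_pos (by linarith)]
    rw [hcalc, dist_eq_norm] at hle
    nlinarith
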